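/- Offset views are interval bijective: for the view given by φ_x(v) = v + o x (with o : Var → ℤ) on integer values, (1) for every finite nonempty constraint c over ℤ, φ_Asn ⁻¹' ⟦conv(c)⟧ = ⟦conv(φ_Asn ⁻¹' c)⟧, and (2) for every domain d with nonempty finite variable domains, φ_Asn '' ⟦conv(⟦d⟧)⟧ = ⟦conv(φ_Asn '' ⟦d⟧)⟧. -/
import Mathlib

namespace Stmt14

variable {Var : Type*}

/-- The assignment set of a domain. -/
def asn (d : Var → Set ℤ) : Set (Var → ℤ) := {a | ∀ x, a x ∈ d x}

/-- A view lifted to assignments. -/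
def lift (φ : Var → ℤ → ℤ) (a : Var → ℤ) : Var → ℤ := fun x => φ x (a x)

/-- The strongest convex domain containing a constraint: for a finite nonempty constraint `c`,
`conv c x = Set.Icc (min over a ∈ c of a x) (max over a ∈ c of a x)`, and `conv ∅` is the
empty domain.  (A value lies between the min and the max of `{a x | a ∈ c}` iff it is above
some `a x` and below some `a' x`.) -/
def conv (c : Set (Var → ℤ)) : Var → Set ℤ :=
  fun x => {v | (∃ a ∈ c, a x ≤ v) ∧ (∃ a ∈ c, v ≤ a x)}

/-- Offset views are interval bijective: for the view `φ_x(v) = v + o x`, (1) the preimage of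
the convex hull of any finite nonempty constraint equals the convex hull of the preimage, and
(2) the image of the convex hull of the assignment set of any domain with nonempty finite
variable domains equals the convex hull of the image. -/
theorem offset_interval_bijective (o : Var → ℤ) :
    (∀ c : Set (Var → ℤ), c.Finite → c.Nonempty →
      lift (fun x v => v + o x) ⁻¹' asn (conv c) =
        asn (conv (lift (fun x v => v + o x) ⁻¹' c))) ∧
    (∀ d : Var → Set ℤ, (∀ x, (d x).Nonempty) → (∀ x, (d x).Finite) →
      lift (fun x v => v + o x) '' asn (conv (asn d)) =
        asn (conv (lift (fun x v => v + o x) '' asn d))) := by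
  constructor
  · intro c _ _
    ext a
    simp only [Set.mem_preimage, asn, conv, lift, Set.mem_setOf_eq]
    constructor <;> intro h x <;> obtain ⟨⟨b1, hb1, h1⟩, ⟨b2, hb2, h2⟩⟩ := h x
    · exact ⟨⟨fun y => b1 y - o y, by show (fun y => b1 y - o y + o y) ∈ c; simpa using hb1, by simp only; omega⟩,
        ⟨fun y => b2 y - o y, by show (fun y => b2 y - o y + o y) ∈ c; simpa using hb2, by simp only; omega⟩⟩
    · exact ⟨⟨_, hb1, by simp only [lift] at h1 ⊢; omega⟩, ⟨_, hb2, by simp only [lift] at h2 ⊢; omega⟩⟩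
  · intro d _ _
    ext a
    constructor
    · rintro ⟨b, hb, rfl⟩ x
      obtain ⟨⟨b1, hb1, h1⟩, ⟨b2, hb2, h2⟩⟩ := hb x
      exact ⟨⟨lift (fun x v => v + o x) b1, ⟨b1, hb1, rfl⟩, by simp only [lift]; omega⟩,
        ⟨lift (fun x v => v + o x) b2, ⟨b2, hb2, rfl⟩, by simp only [lift]; omega⟩⟩
    · intro h
      refine ⟨fun x => a x - o x, ?_, by funext x; simp [lift]⟩
      intro x
      obtain ⟨⟨b1, ⟨c1, hc1, rfl⟩, h1⟩, ⟨b2, ⟨c2, hc2, rfl⟩, h2⟩⟩ := h x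
      exact ⟨⟨c1, hc1, by simp only [lift] at h1 ⊢; omega⟩,
        ⟨c2, hc2, by simp only [lift] at h2 ⊢; omega⟩⟩

end Stmt14
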